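/- Under the primal error setting with coercivity constant α_A, one has ∑_{m=1}^{N} [ (eᵐ)ᵀ M eᵐ + Δt·(eᵐ)ᵀ A_sym eᵐ ] ≤ ((T + Δt)/α_A)·∑_{m=1}^{N} ‖rᵐ‖₋₁², where T = N·Δt. -/

import Mathlib

open Matrix BigOperators Finset

/-- The energy norm `‖v‖_{G*} = √(vᵀ G* v)` induced by a matrix `G`. -/
noncomputable def normG {d : ℕ} (G : Matrix (Fin d) (Fin d) ℝ) (v : Fin d → ℝ) : ℝ :=
  Real.sqrt (v ⬝ᵥ G.mulVec v)

/-- The dual norm `‖r‖₋₁ = sup_{v ≠ 0} (rᵀ v)/‖v‖_{G*}`. -/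
noncomputable def dualNorm {d : ℕ} (G : Matrix (Fin d) (Fin d) ℝ) (r : Fin d → ℝ) : ℝ :=
  ⨆ v : {v : Fin d → ℝ // v ≠ 0}, (r ⬝ᵥ (v : Fin d → ℝ)) / normG G (v : Fin d → ℝ)

/-- The symmetric part `(A + Aᵀ)/2` of a matrix. -/
noncomputable def symPart {d : ℕ} (A : Matrix (Fin d) (Fin d) ℝ) : Matrix (Fin d) (Fin d) ℝ :=
  ((1 : ℝ)/2) • (A + Aᵀ)

section Aux

variable {d : ℕ}

lemma psd_transpose_eq {S : Matrix (Fin d) (Fin d) ℝ} (hS : S.IsHermitian) : Sᵀ = S := by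
  simpa [Matrix.conjTranspose_eq_transpose_of_trivial] using hS.eq

lemma dot_symm {S : Matrix (Fin d) (Fin d) ℝ} (hS : Sᵀ = S) (x y : Fin d → ℝ) :
    x ⬝ᵥ S *ᵥ y = y ⬝ᵥ S *ᵥ x := by
  rw [Matrix.dotProduct_mulVec, ← Matrix.mulVec_transpose, hS, dotProduct_comm]

lemma psd_nonneg' {S : Matrix (Fin d) (Fin d) ℝ} (hS : S.PosSemidef) (x : Fin d → ℝ) :
    0 ≤ x ⬝ᵥ S *ᵥ x := by simpa using hS.dotProduct_mulVec_nonneg x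

lemma cs_psd {S : Matrix (Fin d) (Fin d) ℝ} (hS : S.PosSemidef) (x y : Fin d → ℝ) :
    (x ⬝ᵥ S *ᵥ y) ^ 2 ≤ (x ⬝ᵥ S *ᵥ x) * (y ⬝ᵥ S *ᵥ y) := by
  have hsym : Sᵀ = S := psd_transpose_eq hS.1
  have key : ∀ t : ℝ,
      0 ≤ (y ⬝ᵥ S *ᵥ y) * (t * t) + (2 * (x ⬝ᵥ S *ᵥ y)) * t + (x ⬝ᵥ S *ᵥ x) := by
    intro t
    have h0 := psd_nonneg' hS (x + t • y)
    have hexp : (x + t • y) ⬝ᵥ S *ᵥ (x + t • y)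
        = (y ⬝ᵥ S *ᵥ y) * (t * t) + (2 * (x ⬝ᵥ S *ᵥ y)) * t + (x ⬝ᵥ S *ᵥ x) := by
      have hyx : y ⬝ᵥ S *ᵥ x = x ⬝ᵥ S *ᵥ y := dot_symm hsym y x
      simp only [Matrix.add_mulVec, Matrix.mulVec_add, Matrix.mulVec_smul, dotProduct_add,
        add_dotProduct, smul_dotProduct, dotProduct_smul,
        smul_eq_mul, hyx]
      ring
    linarith [hexp ▸ h0]
  have hd := discrim_le_zero key
  rw [discrim] at hd
  nlinarith [hd]

lemma normG_nonneg (G : Matrix (Fin d) (Fin d) ℝ) (v : Fin d → ℝ) : 0 ≤ normG G v :=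
  Real.sqrt_nonneg _

lemma normG_sq {G : Matrix (Fin d) (Fin d) ℝ} (hG : G.PosDef) (v : Fin d → ℝ) :
    (normG G v) ^ 2 = v ⬝ᵥ G *ᵥ v :=
  Real.sq_sqrt (psd_nonneg' hG.posSemidef v)

lemma normG_pos {G : Matrix (Fin d) (Fin d) ℝ} (hG : G.PosDef) {v : Fin d → ℝ}
    (hv : v ≠ 0) : 0 < normG G v := by
  have := hG.dotProduct_mulVec_pos hv
  simp only [star_trivial] at this
  exact Real.sqrt_pos.mpr this

lemma normG_neg (G : Matrix (Fin d) (Fin d) ℝ) (v : Fin d → ℝ) :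
    normG G (-v) = normG G v := by
  simp [normG, Matrix.mulVec_neg, dotProduct_neg, neg_dotProduct]

/-- A uniform bound: `r ⬝ v ≤ ‖G⁻¹ r‖_G * ‖v‖_G`. -/
lemma dual_raw_bound {G : Matrix (Fin d) (Fin d) ℝ} (hG : G.PosDef) (r w : Fin d → ℝ) :
    r ⬝ᵥ w ≤ normG G (G⁻¹ *ᵥ r) * normG G w := by
  have hsym : Gᵀ = G := psd_transpose_eq hG.posSemidef.1
  set u : Fin d → ℝ := G⁻¹ *ᵥ r with hu
  have hGu : G *ᵥ u = r := by
    rw [hu, Matrix.mulVec_mulVec, Matrix.mul_nonsing_inv _ hG.det_pos.ne'.isUnit,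
      Matrix.one_mulVec]
  have hrw : r ⬝ᵥ w = u ⬝ᵥ G *ᵥ w := by
    rw [← hGu, dotProduct_comm]
    exact dot_symm hsym w u
  have cs := cs_psd hG.posSemidef u w
  have h1 : u ⬝ᵥ G *ᵥ w ≤ Real.sqrt (u ⬝ᵥ G *ᵥ u) * Real.sqrt (w ⬝ᵥ G *ᵥ w) := by
    calc u ⬝ᵥ G *ᵥ w ≤ |u ⬝ᵥ G *ᵥ w| := le_abs_self _
      _ = Real.sqrt ((u ⬝ᵥ G *ᵥ w) ^ 2) := (Real.sqrt_sq_eq_abs _).symm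
      _ ≤ Real.sqrt ((u ⬝ᵥ G *ᵥ u) * (w ⬝ᵥ G *ᵥ w)) := Real.sqrt_le_sqrt cs
      _ = Real.sqrt (u ⬝ᵥ G *ᵥ u) * Real.sqrt (w ⬝ᵥ G *ᵥ w) :=
          Real.sqrt_mul (psd_nonneg' hG.posSemidef u) _
  rw [hrw]
  exact h1

lemma dual_bound {G : Matrix (Fin d) (Fin d) ℝ} (hG : G.PosDef) (hd : 1 ≤ d)
    (r v : Fin d → ℝ) : r ⬝ᵥ v ≤ dualNorm G r * normG G v := by
  have hbdd : BddAbove (Set.range fun w : {w : Fin d → ℝ // w ≠ 0} =>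
      (r ⬝ᵥ (w : Fin d → ℝ)) / normG G (w : Fin d → ℝ)) := by
    refine ⟨normG G (G⁻¹ *ᵥ r), ?_⟩
    rintro _ ⟨⟨w, hw⟩, rfl⟩
    have hpos := normG_pos hG hw
    rw [div_le_iff₀ hpos]
    exact dual_raw_bound hG r w
  by_cases hv : v = 0
  · subst hv
    have hv₀ : (fun _ : Fin d => (1 : ℝ)) ≠ 0 := by
      intro h
      have := congrFun h ⟨0, hd⟩
      simp at this
    have hne : Nonempty {w : Fin d → ℝ // w ≠ 0} := ⟨⟨_, hv₀⟩⟩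
    simp [normG]
  · have h := le_ciSup hbdd (⟨v, hv⟩ : {w : Fin d → ℝ // w ≠ 0})
    have hpos := normG_pos hG hv
    rw [div_le_iff₀ hpos] at h
    exact h

end Aux

theorem stmt5 {d : ℕ} (hd : 1 ≤ d)
    (G M A : Matrix (Fin d) (Fin d) ℝ) (hG : G.PosDef) (hM : M.PosSemidef)
    (Δt : ℝ) (hΔt : 0 < Δt) (N : ℕ) (hN : 1 ≤ N)
    (αA : ℝ) (hαA : 0 < αA)
    (hcoA : ∀ v : Fin d → ℝ, αA * (normG G v)^2 ≤ v ⬝ᵥ (symPart A).mulVec v)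
    (e r : ℕ → Fin d → ℝ) (he0 : e 0 = 0)
    (hstep : ∀ k, 1 ≤ k → k ≤ N →
      (M + Δt • A).mulVec (e k) = M.mulVec (e (k - 1)) - Δt • r k) :
    ∑ m ∈ Finset.Icc 1 N,
        (e m ⬝ᵥ M.mulVec (e m) + Δt * (e m ⬝ᵥ (symPart A).mulVec (e m))) ≤
      ((N * Δt + Δt) / αA) * ∑ m ∈ Finset.Icc 1 N, (dualNorm G (r m))^2 := by
  set Mq : ℕ → ℝ := fun n => e n ⬝ᵥ M.mulVec (e n) with hMqdef
  set a : ℕ → ℝ := fun n => e n ⬝ᵥ (symPart A).mulVec (e n) with hadef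
  set D : ℕ → ℝ := fun n => (dualNorm G (r n))^2 with hDdef
  have ha_nonneg : ∀ n, 0 ≤ a n := fun n =>
    le_trans (by positivity) (hcoA (e n))
  have hMq_nonneg : ∀ n, 0 ≤ Mq n := fun n => psd_nonneg' hM (e n)
  have hD_nonneg : ∀ n, 0 ≤ D n := fun n => sq_nonneg _
  -- per-step inequality
  have hstep' : ∀ n, 1 ≤ n → n ≤ N →
      Mq n - Mq (n - 1) + Δt * a n ≤ (Δt / αA) * D n := by
    intro n h1 h2
    have hdot := congrArg (fun w => e n ⬝ᵥ w) (hstep n h1 h2)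
    simp only [Matrix.add_mulVec, Matrix.smul_mulVec, dotProduct_add,
      dotProduct_sub, dotProduct_smul, smul_eq_mul] at hdot
    -- e n ⬝ A e n = a n
    have hAe : e n ⬝ᵥ A *ᵥ e n = a n := by
      have ht : e n ⬝ᵥ Aᵀ *ᵥ e n = e n ⬝ᵥ A *ᵥ e n := by
        rw [Matrix.mulVec_transpose, dotProduct_comm, ← Matrix.dotProduct_mulVec]
      simp only [hadef, symPart, Matrix.smul_mulVec, Matrix.add_mulVec,
        dotProduct_smul, dotProduct_add, smul_eq_mul, ht]
      ring
    rw [hAe] at hdot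
    -- cross term bound
    have hcross : e n ⬝ᵥ M *ᵥ e (n - 1) ≤ (Mq n + Mq (n - 1)) / 2 := by
      have cs := cs_psd hM (e n) (e (n - 1))
      have hp := hMq_nonneg n
      have hq := hMq_nonneg (n - 1)
      have h1' : e n ⬝ᵥ M *ᵥ e (n - 1) ≤ Real.sqrt (Mq n) * Real.sqrt (Mq (n - 1)) := by
        calc e n ⬝ᵥ M *ᵥ e (n - 1) ≤ |e n ⬝ᵥ M *ᵥ e (n - 1)| := le_abs_self _
          _ = Real.sqrt ((e n ⬝ᵥ M *ᵥ e (n - 1)) ^ 2) := (Real.sqrt_sq_eq_abs _).symm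
          _ ≤ Real.sqrt (Mq n * Mq (n - 1)) := Real.sqrt_le_sqrt cs
          _ = Real.sqrt (Mq n) * Real.sqrt (Mq (n - 1)) := Real.sqrt_mul hp _
      nlinarith [sq_nonneg (Real.sqrt (Mq n) - Real.sqrt (Mq (n - 1))),
        Real.sq_sqrt hp, Real.sq_sqrt hq]
    -- dual / Young bound
    have hdual : -(e n ⬝ᵥ r n) ≤ dualNorm G (r n) * normG G (e n) := by
      have h := dual_bound hG hd (r n) (-(e n))
      rw [dotProduct_neg, normG_neg] at h
      rw [dotProduct_comm] at h
      exact h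
    have hyoung : dualNorm G (r n) * normG G (e n) ≤
        D n / (2 * αA) + (αA / 2) * (normG G (e n)) ^ 2 := by
      have h1 : αA * (dualNorm G (r n) * normG G (e n)) ≤
          (dualNorm G (r n)) ^ 2 / 2 + αA ^ 2 * (normG G (e n)) ^ 2 / 2 := by
        nlinarith [sq_nonneg (dualNorm G (r n) - αA * normG G (e n))]
      calc dualNorm G (r n) * normG G (e n)
          = (αA * (dualNorm G (r n) * normG G (e n))) / αA := by field_simp
        _ ≤ ((dualNorm G (r n)) ^ 2 / 2 + αA ^ 2 * (normG G (e n)) ^ 2 / 2) / αA :=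
            (div_le_div_iff_of_pos_right hαA).mpr h1
        _ = D n / (2 * αA) + (αA / 2) * (normG G (e n)) ^ 2 := by
            rw [hDdef]; field_simp
    have hco := hcoA (e n)
    have hRBpre : -(e n ⬝ᵥ r n) ≤ D n / (2 * αA) + a n / 2 := by
      have : (αA / 2) * (normG G (e n)) ^ 2 ≤ a n / 2 := by linarith
      linarith
    have hRB : Δt * (-(e n ⬝ᵥ r n)) ≤ Δt * (D n / (2 * αA) + a n / 2) :=
      mul_le_mul_of_nonneg_left hRBpre hΔt.le
    have heq : Δt * (D n / (2 * αA) + a n / 2)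
        = (Δt / αA) * D n / 2 + Δt * a n / 2 := by
      field_simp
    rw [heq] at hRB
    -- hdot : Mq n + Δt * a n = e n ⬝ᵥ M *ᵥ e (n-1) - Δt * (e n ⬝ᵥ r n)
    have hdot' : Mq n + Δt * a n = e n ⬝ᵥ M *ᵥ e (n - 1) + Δt * (-(e n ⬝ᵥ r n)) := by
      rw [mul_neg]; linarith [hdot]
    linarith
  -- partial sums (telescoping)
  have hpart : ∀ n, n ≤ N →
      Mq n + Δt * ∑ m ∈ Finset.Icc 1 n, a m ≤ (Δt / αA) * ∑ m ∈ Finset.Icc 1 n, D m := by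
    intro n
    induction n with
    | zero => intro _; simp [hMqdef, he0]
    | succ k ih =>
      intro h
      have hk := ih (Nat.le_of_succ_le h)
      rw [show Finset.Icc 1 (k + 1) = Finset.Ioc 0 (k + 1) by rw [← Finset.Icc_add_one_left_eq_Ioc, zero_add],
        Finset.sum_Ioc_succ_top (Nat.zero_le k), Finset.sum_Ioc_succ_top (Nat.zero_le k),
        ← show Finset.Icc 1 k = Finset.Ioc 0 k by rw [← Finset.Icc_add_one_left_eq_Ioc, zero_add]]
      have hs := hstep' (k + 1) (Nat.le_add_left 1 k) h
      simp only [Nat.add_sub_cancel] at hs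
      have hdist1 : Δt * (∑ m ∈ Finset.Icc 1 k, a m + a (k + 1))
          = Δt * ∑ m ∈ Finset.Icc 1 k, a m + Δt * a (k + 1) := by ring
      have hdist2 : (Δt / αA) * (∑ m ∈ Finset.Icc 1 k, D m + D (k + 1))
          = (Δt / αA) * ∑ m ∈ Finset.Icc 1 k, D m + (Δt / αA) * D (k + 1) := by ring
      rw [hdist1, hdist2]
      linarith
  set S : ℝ := ∑ m ∈ Finset.Icc 1 N, D m with hSdef
  have hS_nonneg : (0 : ℝ) ≤ S := Finset.sum_nonneg fun m _ => hD_nonneg m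
  have hMq_le : ∀ n ∈ Finset.Icc 1 N, Mq n ≤ (Δt / αA) * S := by
    intro n hn
    rw [Finset.mem_Icc] at hn
    have hp := hpart n hn.2
    have hsub : ∑ m ∈ Finset.Icc 1 n, D m ≤ S := by
      apply Finset.sum_le_sum_of_subset_of_nonneg
      · exact Finset.Icc_subset_Icc_right hn.2
      · intro m _ _; exact hD_nonneg m
    have hsa : 0 ≤ Δt * ∑ m ∈ Finset.Icc 1 n, a m :=
      mul_nonneg hΔt.le (Finset.sum_nonneg fun m _ => ha_nonneg m)
    have hda : (Δt / αA) * ∑ m ∈ Finset.Icc 1 n, D m ≤ (Δt / αA) * S :=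
      mul_le_mul_of_nonneg_left hsub (div_nonneg hΔt.le hαA.le)
    linarith
  have hAsum : Δt * ∑ m ∈ Finset.Icc 1 N, a m ≤ (Δt / αA) * S := by
    have hp := hpart N le_rfl
    linarith [hMq_nonneg N]
  have hsplit : ∑ m ∈ Finset.Icc 1 N, (Mq m + Δt * a m)
      = ∑ m ∈ Finset.Icc 1 N, Mq m + Δt * ∑ m ∈ Finset.Icc 1 N, a m := by
    rw [Finset.sum_add_distrib, Finset.mul_sum]
  have hMqsum : ∑ m ∈ Finset.Icc 1 N, Mq m ≤ (N : ℝ) * ((Δt / αA) * S) := by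
    have := Finset.sum_le_sum hMq_le
    rw [Finset.sum_const, Nat.card_Icc, Nat.add_sub_cancel, nsmul_eq_mul] at this
    exact this
  have hfinal : (N : ℝ) * ((Δt / αA) * S) + (Δt / αA) * S
      = ((N * Δt + Δt) / αA) * S := by
    field_simp
  calc ∑ m ∈ Finset.Icc 1 N, (Mq m + Δt * a m)
      = ∑ m ∈ Finset.Icc 1 N, Mq m + Δt * ∑ m ∈ Finset.Icc 1 N, a m := hsplit
    _ ≤ (N : ℝ) * ((Δt / αA) * S) + (Δt / αA) * S := by linarith
    _ = ((N * Δt + Δt) / αA) * S := hfinal
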